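/- Let N ≥ 1 be an integer and let a, l_1, …, l_{N−1}, y_0 be real numbers. Define y_1, …, y_{N−1} recursively by y_n = a·∑_{i=0}^{n−1} ((n−i)/n)·l_{n−i}·y_i. Let D be the N×N strictly lower-triangular Toeplitz matrix with D_{jk} = l_{j−k} for j > k and D_{jk} = 0 for j ≤ k (1-based indices). Then for every 0 ≤ n ≤ N−1, y_n = y_0 · (exp(a·D))_{n+1,1}, i.e., the vector (y_0, …, y_{N−1})^T equals y_0 times the first column of the matrix exponential exp(a·D). (This is the Toeplitz-matrix representation of the derivative recursion in the proof of the paper's Theorem 1.) -/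

import Mathlib

open Finset

private noncomputable def Cc (l : ℕ → ℝ) : ℕ → ℕ → ℝ
  | 0, n => if n = 0 then 1 else 0
  | (k+1), n => ∑ i ∈ Finset.range n, l (n - i) * Cc l k i

private noncomputable def Sc (l : ℕ → ℝ) (k n : ℕ) : ℝ :=
  ∑ i ∈ Finset.range n, ((n - i : ℕ) : ℝ) * l (n - i) * Cc l k i

private lemma Cc_vanish (l : ℕ → ℝ) : ∀ k n, n < k → Cc l k n = 0 := by
  intro k
  induction k with
  | zero => intro n h; omega
  | succ k ih =>
    intro n h
    rw [Cc]
    apply Finset.sum_eq_zero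
    intro i hi
    simp only [Finset.mem_range] at hi
    rw [ih i (by omega), mul_zero]

private lemma Cc_zero (l : ℕ → ℝ) (k : ℕ) : Cc l k 0 = if k = 0 then 1 else 0 := by
  cases k with
  | zero => simp [Cc]
  | succ k => simp [Cc]

private lemma lemB (l : ℕ → ℝ) (k n : ℕ) :
    ∑ i ∈ Finset.range n, l (n - i) * Sc l k i = Sc l (k+1) n := by
  unfold Sc
  simp_rw [Cc, Finset.mul_sum, Finset.sum_sigma']
  apply Finset.sum_nbij' (fun p => (⟨n - p.1 + p.2, p.2⟩ : Σ _ : ℕ, ℕ))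
    (fun p => (⟨n - p.1 + p.2, p.2⟩ : Σ _ : ℕ, ℕ))
  · intro p hp
    simp only [Finset.mem_sigma, Finset.mem_range] at hp ⊢
    omega
  · intro p hp
    simp only [Finset.mem_sigma, Finset.mem_range] at hp ⊢
    omega
  · intro p hp
    simp only [Finset.mem_sigma, Finset.mem_range] at hp
    ext <;> simp <;> omega
  · intro p hp
    simp only [Finset.mem_sigma, Finset.mem_range] at hp
    ext <;> simp <;> omega
  · intro p hp
    simp only [Finset.mem_sigma, Finset.mem_range] at hp
    obtain ⟨h1, h2⟩ := hp
    have e1 : n - (n - p.1 + p.2) = p.1 - p.2 := by omega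
    have e2 : (n - p.1 + p.2) - p.2 = n - p.1 := by omega
    rw [e1, e2]
    push_cast [Nat.cast_sub (le_of_lt h2)]
    ring

private lemma lemA (l : ℕ → ℝ) : ∀ k n : ℕ, (n : ℝ) * Cc l (k+1) n = ((k:ℝ)+1) * Sc l k n := by
  intro k
  induction k with
  | zero =>
    intro n
    rw [Cc, Sc, Finset.mul_sum]
    simp only [Nat.cast_zero, zero_add, one_mul]
    apply Finset.sum_congr rfl
    intro i hi
    simp only [Finset.mem_range] at hi
    rw [show Cc l 0 i = if i = 0 then 1 else 0 from rfl]
    rcases Nat.eq_zero_or_pos i with h | h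
    · subst h; simp
    · rw [if_neg (by omega)]; ring
  | succ k ih =>
    intro n
    have expand : (n : ℝ) * Cc l (k+2) n
        = Sc l (k+1) n + ∑ i ∈ Finset.range n, l (n - i) * ((i:ℝ) * Cc l (k+1) i) := by
      rw [show Cc l (k+2) n = ∑ i ∈ Finset.range n, l (n - i) * Cc l (k+1) i from rfl]
      rw [Finset.mul_sum, Sc, ← Finset.sum_add_distrib]
      apply Finset.sum_congr rfl
      intro i hi
      simp only [Finset.mem_range] at hi
      rw [Nat.cast_sub (le_of_lt hi)]
      ring
    rw [expand]
    have : ∑ i ∈ Finset.range n, l (n - i) * ((i:ℝ) * Cc l (k+1) i)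
        = ((k:ℝ)+1) * ∑ i ∈ Finset.range n, l (n - i) * Sc l k i := by
      rw [Finset.mul_sum]
      apply Finset.sum_congr rfl
      intro i _
      rw [ih i]; ring
    rw [this, lemB]
    push_cast
    ring

private lemma key (l : ℕ → ℝ) (a : ℝ) (N n : ℕ) (h1 : 1 ≤ n) (h2 : n < N) :
    a * ∑ i ∈ Finset.range n, (((n - i : ℕ) : ℝ) / (n : ℝ)) * l (n - i)
          * (∑ k ∈ Finset.range N, a ^ k * (Nat.factorial k : ℝ)⁻¹ * Cc l k i)
      = ∑ k ∈ Finset.range N, a ^ k * (Nat.factorial k : ℝ)⁻¹ * Cc l k n := by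
  have hn0 : (n : ℝ) ≠ 0 := Nat.cast_ne_zero.mpr (by omega)
  rw [Finset.mul_sum]
  have step1 : ∀ i, a * ((((n - i : ℕ) : ℝ) / (n : ℝ)) * l (n - i)
          * (∑ k ∈ Finset.range N, a ^ k * (Nat.factorial k : ℝ)⁻¹ * Cc l k i))
      = ∑ k ∈ Finset.range N, a ^ (k+1) * (Nat.factorial k : ℝ)⁻¹ * (n : ℝ)⁻¹
          * (((n - i : ℕ) : ℝ) * l (n - i) * Cc l k i) := by
    intro i
    rw [Finset.mul_sum, Finset.mul_sum]
    apply Finset.sum_congr rfl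
    intro k _
    field_simp
    ring
  simp_rw [step1]
  rw [Finset.sum_comm]
  have step2 : ∀ k, ∑ i ∈ Finset.range n, a ^ (k+1) * (Nat.factorial k : ℝ)⁻¹ * (n : ℝ)⁻¹
          * (((n - i : ℕ) : ℝ) * l (n - i) * Cc l k i)
      = a ^ (k+1) * (Nat.factorial (k+1) : ℝ)⁻¹ * Cc l (k+1) n := by
    intro k
    rw [← Finset.mul_sum]
    have hS : (∑ i ∈ Finset.range n, ((n - i : ℕ) : ℝ) * l (n - i) * Cc l k i) = Sc l k n := rfl
    rw [hS]
    have hA := lemA l k n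
    have hk : ((Nat.factorial (k+1) : ℝ)) = ((k : ℝ) + 1) * (Nat.factorial k : ℝ) := by
      push_cast [Nat.factorial_succ]; ring
    have hkf : (Nat.factorial k : ℝ) ≠ 0 := Nat.cast_ne_zero.mpr (Nat.factorial_ne_zero k)
    have hk1 : ((k : ℝ) + 1) ≠ 0 := by positivity
    rw [hk]
    field_simp
    linear_combination (-(a ^ (k+1))) * hA
  simp_rw [step2]
  have hs1 := Finset.sum_range_succ' (fun k => a ^ k * (Nat.factorial k : ℝ)⁻¹ * Cc l k n) N
  have hs2 := Finset.sum_range_succ (fun k => a ^ k * (Nat.factorial k : ℝ)⁻¹ * Cc l k n) N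
  have hg0 : a ^ 0 * (Nat.factorial 0 : ℝ)⁻¹ * Cc l 0 n = 0 := by
    rw [show Cc l 0 n = if n = 0 then 1 else 0 from rfl, if_neg (by omega), mul_zero]
  have hgN : a ^ N * (Nat.factorial N : ℝ)⁻¹ * Cc l N n = 0 := by
    rw [Cc_vanish l N n h2, mul_zero]
  rw [hg0] at hs1
  rw [hgN] at hs2
  linarith [hs1, hs2]


/-- The Toeplitz-matrix representation of the derivative recursion in the proof of the paper's
Theorem 1: if `y_n = a·∑_{i=0}^{n−1} ((n−i)/n)·l_{n−i}·y_i` for `1 ≤ n ≤ N−1`, and `D` is the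
`N×N` strictly lower-triangular Toeplitz matrix with entries `D_{jk} = l_{j−k}` for `j > k`, then
`y_n = y_0 · (exp(a·D))_{n+1,1}` for every `0 ≤ n ≤ N−1`. -/
theorem recursion_eq_matrix_exp_column (N : ℕ) (hN : 1 ≤ N)
    (a : ℝ) (l : ℕ → ℝ) (y : ℕ → ℝ)
    (hrec : ∀ n : ℕ, 1 ≤ n → n ≤ N - 1 →
      y n = a * ∑ i ∈ Finset.range n, (((n - i : ℕ) : ℝ) / (n : ℝ)) * l (n - i) * y i)
    (D : Matrix (Fin N) (Fin N) ℝ)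
    (hD : ∀ j k : Fin N, D j k = if (k : ℕ) < (j : ℕ) then l ((j : ℕ) - (k : ℕ)) else 0) :
    ∀ n : ℕ, ∀ hn : n < N,
      y n = y 0 * (NormedSpace.exp (a • D)) ⟨n, hn⟩ ⟨0, hN⟩ := by
  -- strictly triangular vanishing of powers
  have h1 : ∀ k : ℕ, ∀ i j : Fin N, (i : ℕ) < (j : ℕ) + k → (D ^ k) i j = 0 := by
    intro k
    induction k with
    | zero =>
      intro i j h
      rw [pow_zero, Matrix.one_apply_ne]
      intro heq
      rw [heq] at h
      omega
    | succ k ihk =>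
      intro i j h
      rw [pow_succ', Matrix.mul_apply]
      apply Finset.sum_eq_zero
      intro m _
      rcases lt_or_ge (m : ℕ) (i : ℕ) with hm | hm
      · rw [ihk m j (by omega), mul_zero]
      · rw [hD i m, if_neg (by omega), zero_mul]
  have h2 : ∀ k : ℕ, N ≤ k → D ^ k = 0 := by
    intro k hk
    ext i j
    have hi := i.isLt
    rw [h1 k i j (by omega)]
    rfl
  -- powers entries equal Cc
  have h3 : ∀ k : ℕ, ∀ n : ℕ, ∀ hn : n < N, (D ^ k) ⟨n, hn⟩ ⟨0, hN⟩ = Cc l k n := by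
    intro k
    induction k with
    | zero =>
      intro n hn
      rw [pow_zero]
      simp [Matrix.one_apply, Fin.ext_iff, Cc]
    | succ k ihk =>
      intro n hn
      rw [pow_succ', Matrix.mul_apply]
      have hterm : ∀ m : Fin N, D ⟨n, hn⟩ m * (D ^ k) m ⟨0, hN⟩
          = (if (m : ℕ) < n then l (n - (m : ℕ)) * Cc l k (m : ℕ) else 0) := by
        intro m
        rw [hD]
        by_cases hm : (m : ℕ) < n
        · rw [if_pos hm, if_pos hm, ihk (m : ℕ) m.isLt]
        · rw [if_neg hm, if_neg hm, zero_mul]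
      simp_rw [hterm]
      rw [show Cc l (k+1) n = ∑ i ∈ Finset.range n, l (n - i) * Cc l k i from rfl]
      rw [Fin.sum_univ_eq_sum_range (fun m => if m < n then l (n - m) * Cc l k m else 0) N]
      rw [← Finset.sum_subset (Finset.range_subset_range.mpr (le_of_lt hn))
        (by
          intro x hx hx'
          simp only [Finset.mem_range] at hx hx'
          rw [if_neg (by omega)])]
      apply Finset.sum_congr rfl
      intro i hi
      simp only [Finset.mem_range] at hi
      rw [if_pos hi]
  -- exp is a finite sum
  have h4 : NormedSpace.exp (a • D)
      = ∑ k ∈ Finset.range N, (Nat.factorial k : ℝ)⁻¹ • (a • D) ^ k := by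
    simp only [NormedSpace.exp_eq_tsum (𝕂 := ℝ)]
    exact tsum_eq_sum (by
      intro k hk
      simp only [Finset.mem_range, not_lt] at hk
      rw [smul_pow, h2 k hk, smul_zero, smul_zero])
  have h5 : ∀ n : ℕ, ∀ hn : n < N, (NormedSpace.exp (a • D)) ⟨n, hn⟩ ⟨0, hN⟩
      = ∑ k ∈ Finset.range N, a ^ k * (Nat.factorial k : ℝ)⁻¹ * Cc l k n := by
    intro n hn
    rw [h4]
    rw [Matrix.sum_apply]
    apply Finset.sum_congr rfl
    intro k _
    rw [smul_pow]
    simp only [Matrix.smul_apply, smul_eq_mul, h3 k n hn]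
    ring
  -- main induction
  intro n
  induction n using Nat.strong_induction_on with
  | _ n IH =>
    intro hn
    rcases Nat.eq_zero_or_pos n with h0 | hpos
    · subst h0
      rw [h5 0 hn]
      have hone : ∑ k ∈ Finset.range N, a ^ k * (Nat.factorial k : ℝ)⁻¹ * Cc l k 0 = 1 := by
        rw [Finset.sum_eq_single 0]
        · simp [Cc]
        · intro k _ hk
          rw [Cc_zero, if_neg hk, mul_zero]
        · intro h
          exact absurd (Finset.mem_range.mpr (by omega)) h
      rw [hone, mul_one]
    · have hstep : ∑ i ∈ Finset.range n, (((n - i : ℕ) : ℝ) / (n : ℝ)) * l (n - i) * y i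
          = y 0 * ∑ i ∈ Finset.range n, (((n - i : ℕ) : ℝ) / (n : ℝ)) * l (n - i)
              * (∑ k ∈ Finset.range N, a ^ k * (Nat.factorial k : ℝ)⁻¹ * Cc l k i) := by
        rw [Finset.mul_sum]
        apply Finset.sum_congr rfl
        intro i hi
        simp only [Finset.mem_range] at hi
        rw [IH i hi (by omega), h5 i (by omega)]
        ring
      rw [hrec n hpos (by omega), hstep, h5 n hn, ← key l a N n hpos hn]
      ring
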